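/- Let E ⊆ ℝ be a set with the property that for every sequence (α_m) of reals strictly decreasing to 0 there exist t ∈ ℝ and δ ≠ 0 such that t + δα_m ∈ E for all m. Then E is somewhere dense, i.e., the closure of E contains a nondegenerate open interval. -/

import Mathlib

open Set Filter

lemma escape_aux (F : Set ℝ) (hni : ∀ a b : ℝ, a < b → ∃ x ∈ Ioo a b, x ∉ F)
    (t δ : ℝ) (hδ : δ ≠ 0) (a b : ℝ) (hab : a < b) :
    ∃ β ∈ Ioo a b, t + δ * β ∉ F := by
  rcases hδ.lt_or_gt with hd | hd
  · obtain ⟨x, hx, hxF⟩ := hni (t + δ * b) (t + δ * a) (by nlinarith)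
    refine ⟨(x - t)/δ, ⟨?_, ?_⟩, ?_⟩
    · rw [lt_div_iff_of_neg hd]; linarith [hx.2]
    · rw [div_lt_iff_of_neg hd]; linarith [hx.1]
    · have hx' : t + δ * ((x - t)/δ) = x := by field_simp; ring
      rwa [hx']
  · obtain ⟨x, hx, hxF⟩ := hni (t + δ * a) (t + δ * b) (by nlinarith)
    refine ⟨(x - t)/δ, ⟨?_, ?_⟩, ?_⟩
    · rw [lt_div_iff₀ hd]; linarith [hx.1]
    · rw [div_lt_iff₀ hd]; linarith [hx.2]
    · have hx' : t + δ * ((x - t)/δ) = x := by field_simp; ring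
      rwa [hx']

lemma cover_aux (F : Set ℝ) (hFc : IsClosed F)
    (hni : ∀ a b : ℝ, a < b → ∃ x ∈ Ioo a b, x ∉ F)
    (K : Set (ℝ × ℝ)) (hK : IsCompact K) (hK0 : ∀ p ∈ K, p.2 ≠ 0)
    (a b : ℝ) (hab : a < b) :
    ∃ B : Finset ℝ, (∀ β ∈ B, β ∈ Ioo a b) ∧ ∀ p ∈ K, ∃ β ∈ B, p.1 + p.2 * β ∉ F := by
  have hopen : ∀ β : ℝ, IsOpen {p : ℝ × ℝ | p.1 + p.2 * β ∉ F} := by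
    intro β
    have hc : Continuous fun p : ℝ × ℝ => p.1 + p.2 * β := by continuity
    exact hFc.isOpen_compl.preimage hc
  have hcov : K ⊆ ⋃ β ∈ Ioo a b, {p : ℝ × ℝ | p.1 + p.2 * β ∉ F} := by
    intro p hp
    obtain ⟨β, hβ, hβF⟩ := escape_aux F hni p.1 p.2 (hK0 p hp) a b hab
    exact mem_biUnion hβ hβF
  obtain ⟨B0, hB0sub, hB0fin, hB0cov⟩ := hK.elim_finite_subcover_image (fun β _ => hopen β) hcov
  refine ⟨hB0fin.toFinset, by simpa using fun β hβ => hB0sub hβ, ?_⟩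
  intro p hp
  have := hB0cov hp
  simp only [mem_iUnion, exists_prop] at this
  obtain ⟨β, hβ, hpβ⟩ := this
  exact ⟨β, hB0fin.mem_toFinset.2 hβ, hpβ⟩

lemma getD_strict_aux (l : List ℝ) (hl : l.Pairwise (· > ·)) (i j : ℕ) (hij : i < j)
    (hj : j < l.length) : l.getD j 0 < l.getD i 0 := by
  rw [List.getD_eq_getElem _ _ hj, List.getD_eq_getElem _ _ (lt_trans hij hj)]
  have := hl.rel_get_of_lt (a := ⟨i, lt_trans hij hj⟩) (b := ⟨j, hj⟩) (Fin.mk_lt_mk.2 hij)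
  simpa [List.get_eq_getElem] using this

theorem somewhere_dense_of_contains_all_decreasing (E : Set ℝ)
    (h : ∀ α : ℕ → ℝ, StrictAnti α → Tendsto α atTop (nhds 0) →
      ∃ t δ : ℝ, δ ≠ 0 ∧ ∀ m, t + δ * α m ∈ E) :
    ∃ a b : ℝ, a < b ∧ Ioo a b ⊆ closure E := by
  by_contra hcon
  push_neg at hcon
  set F := closure E with hFdef
  have hFc : IsClosed F := isClosed_closure
  have hni : ∀ a b : ℝ, a < b → ∃ x ∈ Ioo a b, x ∉ F := by
    intro a b hab
    exact not_subset.1 (hcon a b hab)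
  set K : ℕ → Set (ℝ × ℝ) := fun n =>
    (Icc (-(n:ℝ)) n) ×ˢ ((Icc (-(n:ℝ)) (-(1/(n+1)))) ∪ Icc (1/(n+1)) (n:ℝ)) with hKdef
  have hKc : ∀ n, IsCompact (K n) :=
    fun n => isCompact_Icc.prod (isCompact_Icc.union isCompact_Icc)
  have hK0 : ∀ n, ∀ p ∈ K n, p.2 ≠ 0 := by
    intro n p hp
    have hpos : (0:ℝ) < 1/(n+1) := by positivity
    rcases hp.2 with h1 | h1
    · have := h1.2; intro h0; rw [h0] at this; linarith
    · have := h1.1; intro h0; rw [h0] at this; linarith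
  have hpow : ∀ n : ℕ, ((1/2:ℝ))^(n+1) < (1/2:ℝ)^n := fun n =>
    pow_lt_pow_right_of_lt_one₀ (by norm_num) (by norm_num) (Nat.lt_succ_self n)
  choose B hB1 hB2 using fun n =>
    cover_aux F hFc hni (K n) (hKc n) (hK0 n) ((1/2:ℝ)^(n+1)) ((1/2:ℝ)^n) (hpow n)
  set B' : ℕ → Finset ℝ := fun n => insert ((3/2) * (1/2:ℝ)^(n+1)) (B n) with hB'def
  have hB'sub : ∀ n, ∀ β ∈ B' n, β ∈ Ioo ((1/2:ℝ)^(n+1)) ((1/2:ℝ)^n) := by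
    intro n β hβ
    rcases Finset.mem_insert.1 hβ with rfl | hβ
    · have h0 : (0:ℝ) < (1/2:ℝ)^(n+1) := by positivity
      constructor
      · nlinarith
      · have he : (3/2:ℝ) * (1/2)^(n+1) = (3/4) * (1/2:ℝ)^n := by ring
        rw [he]
        have h0' : (0:ℝ) < (1/2:ℝ)^n := by positivity
        nlinarith
    · exact hB1 n β hβ
  set L : ℕ → List ℝ := fun n => (B' n).sort (· ≥ ·) with hLdef
  have hLmem : ∀ n β, β ∈ L n ↔ β ∈ B' n := fun n β => Finset.mem_sort _
  have hLsorted : ∀ n, (L n).Pairwise (· > ·) := fun n => (Finset.sortedGT_sort _).pairwise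
  have hLlen : ∀ n, 1 ≤ (L n).length := by
    intro n
    rw [hLdef]
    simp only [Finset.length_sort]
    exact Finset.card_pos.2 (Finset.insert_nonempty _ _)
  set S : ℕ → ℕ := fun n => ∑ j ∈ Finset.range n, (L j).length with hSdef
  have hS0 : S 0 = 0 := by simp [hSdef]
  have hSsucc : ∀ n, S (n+1) = S n + (L n).length := fun n => Finset.sum_range_succ _ n
  have hSmono : Monotone S := by
    intro i j hij
    exact Finset.sum_le_sum_of_subset (Finset.range_subset_range.2 hij)
  have hSn : ∀ n, n ≤ S n := by
    intro n
    calc n = ∑ _j ∈ Finset.range n, 1 := by simp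
    _ ≤ S n := Finset.sum_le_sum (fun j _ => hLlen j)
  set nm : ℕ → ℕ := fun m => Nat.findGreatest (fun n => S n ≤ m) m with hnmdef
  have h1 : ∀ m, S (nm m) ≤ m := fun m =>
    Nat.findGreatest_spec (P := fun n => S n ≤ m) (Nat.zero_le m)
      (by show S 0 ≤ m; rw [hS0]; exact Nat.zero_le m)
  have h3 : ∀ k m, S k ≤ m → k ≤ nm m := fun k m hk =>
    Nat.le_findGreatest (P := fun n => S n ≤ m) (le_trans (hSn k) hk) hk
  have h2 : ∀ m, m < S (nm m + 1) := by
    intro m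
    by_contra hc
    push_neg at hc
    have hle : nm m + 1 ≤ m := le_trans (hSn _) hc
    exact Nat.findGreatest_is_greatest (P := fun n => S n ≤ m) (Nat.lt_succ_self _) hle hc
  have hidx : ∀ m, m - S (nm m) < (L (nm m)).length := by
    intro m
    have ha := h2 m
    have hb := h1 m
    rw [hSsucc] at ha
    omega
  set α : ℕ → ℝ := fun m => (L (nm m)).getD (m - S (nm m)) 0 with hαdef
  have hαmem : ∀ m, α m ∈ B' (nm m) := by
    intro m
    rw [← hLmem, hαdef]
    simp only
    rw [List.getD_eq_getElem _ _ (hidx m)]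
    exact List.getElem_mem _
  have hαIoo : ∀ m, α m ∈ Ioo ((1/2:ℝ)^(nm m + 1)) ((1/2:ℝ)^(nm m)) :=
    fun m => hB'sub _ _ (hαmem m)
  have hnmle : ∀ {m m'}, m ≤ m' → nm m ≤ nm m' := by
    intro m m' hmm
    exact h3 _ _ (le_trans (h1 m) hmm)
  have hnmSpec : ∀ n i, i < (L n).length → nm (S n + i) = n := by
    intro n i hi
    have hub : n ≤ nm (S n + i) := h3 n _ (Nat.le_add_right _ _)
    have hlb : nm (S n + i) ≤ n := by
      by_contra hc
      push_neg at hc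
      have hmono : S (n+1) ≤ S (nm (S n + i)) := hSmono hc
      have hc1 := h1 (S n + i)
      have hs := hSsucc n
      omega
    omega
  have hsa : StrictAnti α := by
    intro m m' hmm
    have hn : nm m ≤ nm m' := hnmle hmm.le
    rcases eq_or_lt_of_le hn with heq | hlt
    · have hm'eq : α m' = (L (nm m)).getD (m' - S (nm m)) 0 := by
        rw [hαdef]; simp only; rw [← heq]
      have hmeq : α m = (L (nm m)).getD (m - S (nm m)) 0 := by rw [hαdef]
      have hi : m - S (nm m) < m' - S (nm m) := by
        have h1m := h1 m
        have h1m' := h1 m'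
        rw [← heq] at h1m'
        omega
      have hjlt : m' - S (nm m) < (L (nm m)).length := by
        have := hidx m'
        rw [← heq] at this
        exact this
      rw [hm'eq, hmeq]
      exact getD_strict_aux _ (hLsorted _) _ _ hi hjlt
    · have hm' : α m' < (1/2:ℝ)^(nm m') := (hαIoo m').2
      have hm : (1/2:ℝ)^(nm m + 1) < α m := (hαIoo m).1
      have hp : (1/2:ℝ)^(nm m') ≤ (1/2:ℝ)^(nm m + 1) :=
        pow_le_pow_of_le_one (by norm_num) (by norm_num) hlt
      linarith
  have htd : Tendsto α atTop (nhds 0) := by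
    rw [tendsto_order]
    constructor
    · intro c hc
      filter_upwards with m
      have := (hαIoo m).1
      have h0 : (0:ℝ) < (1/2:ℝ)^(nm m + 1) := by positivity
      linarith
    · intro c hc
      obtain ⟨k, hk⟩ := exists_pow_lt_of_lt_one hc (by norm_num : (1/2:ℝ) < 1)
      filter_upwards [eventually_ge_atTop (S k)] with m hm
      have hkn : k ≤ nm m := h3 k m hm
      have hub := (hαIoo m).2
      have hp : (1/2:ℝ)^(nm m) ≤ (1/2:ℝ)^k :=
        pow_le_pow_of_le_one (by norm_num) (by norm_num) hkn
      linarith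
  obtain ⟨t, δ, hδ, hmem⟩ := h α hsa htd
  obtain ⟨n, hn⟩ := exists_nat_ge (max (max |t| |δ|) (1/|δ|))
  have hδpos : (0:ℝ) < |δ| := abs_pos.2 hδ
  have htn : |t| ≤ n := le_trans (le_trans (le_max_left _ _) (le_max_left _ _)) hn
  have hδn : |δ| ≤ n := le_trans (le_trans (le_max_right _ _) (le_max_left _ _)) hn
  have hδinv : 1/((n:ℝ)+1) ≤ |δ| := by
    have h1n : 1/|δ| ≤ n := le_trans (le_max_right _ _) hn
    rw [div_le_iff₀ (by positivity)]
    rw [div_le_iff₀ hδpos] at h1n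
    nlinarith
  have hKmem : (t, δ) ∈ K n := by
    constructor
    · constructor
      · linarith [neg_abs_le t]
      · linarith [le_abs_self t]
    · rcases hδ.lt_or_gt with hd | hd
      · left
        rw [abs_of_neg hd] at hδn hδinv
        constructor <;> [linarith; linarith]
      · right
        rw [abs_of_pos hd] at hδn hδinv
        exact ⟨hδinv, hδn⟩
  obtain ⟨β, hβB, hβF⟩ := hB2 n (t, δ) hKmem
  have hβB' : β ∈ B' n := Finset.mem_insert_of_mem hβB
  have hβL : β ∈ L n := (hLmem n β).2 hβB'
  obtain ⟨⟨i, hi⟩, hget⟩ := List.mem_iff_get.1 hβL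
  have hnm : nm (S n + i) = n := hnmSpec n i hi
  have hαm : α (S n + i) = β := by
    rw [hαdef]
    simp only
    rw [hnm]
    have hidx2 : S n + i - S n = i := by omega
    rw [hidx2, List.getD_eq_getElem _ _ hi, ← hget]
    simp [List.get_eq_getElem]
  exact hβF (by rw [← hαm]; exact subset_closure (hmem (S n + i)))
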